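/- Let K be a symmetric (0,2)-tensor of projective weight −4 on an oriented n-manifold M that satisfies the projective Killing equation K_{ij,k} + K_{jk,i} + K_{ki,j} = 0 with respect to (any connection in) a projective class [Γ]. Then for any pseudo-Riemannian metric g whose Levi-Civita connection lies in [Γ], the unweighted symmetric (0,2)-tensor field K̂ := K ⊗ (Vol_g)^{4/(n+1)} is a Killing tensor of g, i.e., it satisfies K̂_{ij,k} + K̂_{jk,i} + K̂_{ki,j} = 0 with respect to the Levi-Civita connection of g. -/

import Mathlib

open scoped ContDiff

noncomputable section

namespace ProjGeo

/-- The partial derivative of a function on `ℝⁿ` in the `j`-th coordinate direction. -/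
def pd {n : ℕ} (j : Fin n) (f : (Fin n → ℝ) → ℝ) (p : Fin n → ℝ) : ℝ :=
  fderiv ℝ f p (Pi.single j 1)

/-- Christoffel symbols in coordinates: `Γ p i j k` represents `Γ^i_{jk}` at the point `p`. -/
abbrev Christoffel (n : ℕ) := (Fin n → ℝ) → Fin n → Fin n → Fin n → ℝ

/-- A connection is torsion-free (symmetric) if `Γ^i_{jk} = Γ^i_{kj}`. -/
def TorsionFree {n : ℕ} (Γ : Christoffel n) : Prop :=
  ∀ p i j k, Γ p i j k = Γ p i k j

/-- Smoothness of the Christoffel symbols on the open set `U`. -/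
def SmoothChristoffelOn {n : ℕ} (U : Set (Fin n → ℝ)) (Γ : Christoffel n) : Prop :=
  ∀ i j k, ContDiffOn ℝ ∞ (fun p => Γ p i j k) U

/-- `γ` is a (parameterized) geodesic of the connection `Γ` on the parameter set `I`,
staying inside `U`: it is smooth and satisfies `γ̈^i + Γ^i_{jk} γ̇^j γ̇^k = 0`. -/
def IsGeodesicOn {n : ℕ} (U : Set (Fin n → ℝ)) (Γ : Christoffel n)
    (γ : ℝ → Fin n → ℝ) (I : Set ℝ) : Prop :=
  (∀ t ∈ I, γ t ∈ U) ∧ (∀ i, ContDiffOn ℝ ∞ (fun t => γ t i) I) ∧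
  ∀ t ∈ I, ∀ i,
    deriv (fun s => deriv (fun u => γ u i) s) t
      + ∑ j, ∑ k, Γ (γ t) i j k * deriv (fun u => γ u j) t * deriv (fun u => γ u k) t = 0

/-- `h` is a smooth regular reparameterisation defined on `J` and mapping `J` bijectively
onto `I`. -/
def IsReparam (I J : Set ℝ) (h : ℝ → ℝ) : Prop :=
  ContDiffOn ℝ ∞ h J ∧ (∀ t ∈ J, deriv h t ≠ 0) ∧ Set.BijOn h J I

/-- Two connections are projectively equivalent on `U`: each geodesic of the one is, after a
suitable reparameterisation, a geodesic of the other, and vice versa. -/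
def ProjEquivOn {n : ℕ} (U : Set (Fin n → ℝ)) (Γ Γ' : Christoffel n) : Prop :=
  (∀ γ I, IsOpen I → IsGeodesicOn U Γ γ I →
    ∃ h J, IsOpen J ∧ IsReparam I J h ∧ IsGeodesicOn U Γ' (fun t => γ (h t)) J) ∧
  (∀ γ I, IsOpen I → IsGeodesicOn U Γ' γ I →
    ∃ h J, IsOpen J ∧ IsReparam I J h ∧ IsGeodesicOn U Γ (fun t => γ (h t)) J)

/-- `Γ'` is obtained from `Γ` by the projective change associated with the 1-form `φ`:
`Γ'^i_{jk} = Γ^i_{jk} + φ_k δ^i_j + φ_j δ^i_k` on `U`. -/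
def ProjChange {n : ℕ} (Γ Γ' : Christoffel n) (φ : (Fin n → ℝ) → Fin n → ℝ)
    (U : Set (Fin n → ℝ)) : Prop :=
  ∀ p ∈ U, ∀ i j k, Γ' p i j k =
    Γ p i j k + (if i = j then φ p k else 0) + (if i = k then φ p j else 0)

end ProjGeo

namespace ProjGeo

/-- The covariant derivative `K_{ij,k}` of a `(0,2)`-tensor `K` of projective weight `w`
(in the local trivialization of `(Λₙ)^{w/(n+1)}` by `(dx¹∧⋯∧dxⁿ)^{w/(n+1)}`):
`K_{ij,k} = ∂_k K_{ij} − Γ^s_{ik} K_{sj} − Γ^s_{jk} K_{is} − (w/(n+1)) Γ^s_{sk} K_{ij}`. -/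
def covForm2 {n : ℕ} (w : ℝ) (Γ : Christoffel n) (K : (Fin n → ℝ) → Fin n → Fin n → ℝ)
    (p : Fin n → ℝ) (i j k : Fin n) : ℝ :=
  pd k (fun q => K q i j) p - ∑ s, Γ p s i k * K p s j - ∑ s, Γ p s j k * K p i s
    - (w / ((n : ℝ) + 1)) * (∑ s, Γ p s s k) * K p i j

end ProjGeo

namespace ProjGeo

/-- A (pseudo-Riemannian) metric on `U` in coordinates: a smooth symmetric nondegenerate
matrix-valued function. -/
def MetricOn {n : ℕ} (U : Set (Fin n → ℝ))
    (g : (Fin n → ℝ) → Matrix (Fin n) (Fin n) ℝ) : Prop :=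
  (∀ i j, ContDiffOn ℝ ∞ (fun p => g p i j) U) ∧
  (∀ p ∈ U, ∀ i j, g p i j = g p j i) ∧
  (∀ p ∈ U, (g p).det ≠ 0)

/-- A Riemannian (positive definite) metric on `U` in coordinates. -/
def RiemannianOn {n : ℕ} (U : Set (Fin n → ℝ))
    (g : (Fin n → ℝ) → Matrix (Fin n) (Fin n) ℝ) : Prop :=
  MetricOn U g ∧
  ∀ p ∈ U, ∀ v : Fin n → ℝ, v ≠ 0 → 0 < ∑ i, ∑ j, g p i j * v i * v j

/-- The Christoffel symbols of the Levi-Civita connection of the metric `g`: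
`Γ^i_{jk} = ½ g^{is} (∂_j g_{sk} + ∂_k g_{sj} − ∂_s g_{jk})`. -/
def LeviCivita {n : ℕ} (g : (Fin n → ℝ) → Matrix (Fin n) (Fin n) ℝ) : Christoffel n :=
  fun p i j k => (1 / 2) * ∑ s, (g p)⁻¹ i s *
    (pd j (fun q => g q s k) p + pd k (fun q => g q s j) p - pd s (fun q => g q j k) p)

end ProjGeo

namespace ProjGeo

open Matrix


open Matrix

/-- determinant as a continuous multilinear map in the rows -/
def detCM (n : ℕ) : ContinuousMultilinearMap ℝ (fun _ : Fin n => (Fin n → ℝ)) ℝ :=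
  (Matrix.detRowAlternating : (Fin n → ℝ) [⋀^Fin n]→ₗ[ℝ] ℝ).toMultilinearMap.mkContinuous
    (Nat.factorial n) (by
      intro m
      show ‖Matrix.det (Matrix.of m)‖ ≤ _
      rw [Matrix.det_apply]
      refine (norm_sum_le _ _).trans ?_
      have hterm : ∀ σ : Equiv.Perm (Fin n),
          ‖Equiv.Perm.sign σ • ∏ i, Matrix.of m (σ i) i‖ ≤ ∏ i, ‖m i‖ := by
        intro σ
        have h1 : ‖Equiv.Perm.sign σ • ∏ i, Matrix.of m (σ i) i‖
            = ‖∏ i, Matrix.of m (σ i) i‖ := by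
          rcases Int.units_eq_one_or (Equiv.Perm.sign σ) with h | h <;>
            simp [h, norm_neg]
        rw [h1]
        calc ‖∏ i, Matrix.of m (σ i) i‖ = ∏ i, ‖m (σ i) i‖ := by
              rw [norm_prod]; rfl
          _ ≤ ∏ i, ‖m (σ i)‖ := by
              refine Finset.prod_le_prod (fun i _ => norm_nonneg _) fun i _ => ?_
              exact norm_le_pi_norm (m (σ i)) i
          _ = ∏ i, ‖m i‖ := Equiv.prod_comp σ fun a => ‖m a‖
      refine (Finset.sum_le_sum fun σ _ => hterm σ).trans ?_
      rw [Finset.sum_const, Finset.card_univ, Fintype.card_perm]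
      simp [nsmul_eq_mul])

lemma det_updateRow_linear {n : ℕ} (A : Matrix (Fin n) (Fin n) ℝ) (a : Fin n) (v : Fin n → ℝ) :
    (A.updateRow a v).det = ∑ i, v i * A.adjugate i a := by
  have hv : v = ∑ i, v i • (Pi.single i (1 : ℝ) : Fin n → ℝ) := by
    ext j
    simp [Pi.single_apply, eq_comm]
  calc (A.updateRow a v).det = Matrix.cramer Aᵀ v a := by
        rw [Matrix.cramer_apply, Matrix.updateCol_transpose, Matrix.det_transpose]
    _ = ∑ i, v i * A.adjugate i a := by
        conv_lhs => rw [hv]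
        rw [map_sum]
        simp [Matrix.adjugate_def, smul_eq_mul]

lemma adjugate_eq_det_smul_inv {n : ℕ} (A : Matrix (Fin n) (Fin n) ℝ) (hA : A.det ≠ 0)
    (i j : Fin n) : A.adjugate i j = A.det * A⁻¹ i j := by
  rw [Matrix.inv_def, Ring.inverse_eq_inv]
  simp only [Matrix.smul_apply, smul_eq_mul]
  field_simp

lemma hasFDerivAt_det_comp {n : ℕ} (g : (Fin n → ℝ) → Matrix (Fin n) (Fin n) ℝ)
    (p : Fin n → ℝ) (hdiff : ∀ a b, DifferentiableAt ℝ (fun q => g q a b) p) :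
    HasFDerivAt (fun q => (g q).det)
      (∑ a, ∑ i, Matrix.adjugate (g p) i a • fderiv ℝ (fun q => g q a i) p) p := by
  have hrows : HasFDerivAt (fun q (a : Fin n) (b : Fin n) => g q a b)
      (ContinuousLinearMap.pi fun a => ContinuousLinearMap.pi fun b =>
        fderiv ℝ (fun q => g q a b) p) p := by
    apply hasFDerivAt_pi''
    intro a
    apply hasFDerivAt_pi''
    intro b
    have h := (hdiff a b).hasFDerivAt
    exact h
  have hcomp := ((detCM n).hasFDerivAt (fun a b => g p a b)).comp p hrows
  apply HasFDerivAt.congr_fderiv hcomp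
  symm
  ext v
  simp only [ContinuousLinearMap.comp_apply, ContinuousMultilinearMap.linearDeriv_apply]
  rw [ContinuousLinearMap.sum_apply]
  congr 1
  ext a
  have hupd : (Function.update (fun (a : Fin n) (b : Fin n) => g p a b) a
      ((ContinuousLinearMap.pi fun a => ContinuousLinearMap.pi fun b =>
        fderiv ℝ (fun q => g q a b) p) v a))
      = ((g p).updateRow a (fun i => fderiv ℝ (fun q => g q a i) p v) :
          Matrix (Fin n) (Fin n) ℝ) := by
    ext x y
    by_cases hx : x = a <;> simp [Matrix.updateRow_apply, hx, Function.update_apply]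
  calc (∑ i, Matrix.adjugate (g p) i a • fderiv ℝ (fun q => g q a i) p) v
      = ∑ i, (fderiv ℝ (fun q => g q a i) p v) * Matrix.adjugate (g p) i a := by
        rw [ContinuousLinearMap.sum_apply]; congr 1; ext i
        simp [mul_comm]
    _ = ((g p).updateRow a (fun i => fderiv ℝ (fun q => g q a i) p v)).det :=
        (det_updateRow_linear _ _ _).symm
    _ = detCM n (Function.update (fun (a : Fin n) (b : Fin n) => g p a b) a _) := by
        rw [hupd]; rfl

lemma my_hasDerivAt_abs_rpow {c x : ℝ} (hx : x ≠ 0) :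
    HasDerivAt (fun y => |y| ^ c) (c * |x| ^ c / x) x := by
  rcases hx.lt_or_gt with h | h
  · have hne : -x ≠ 0 := neg_ne_zero.mpr hx
    have h1 : HasDerivAt (fun y : ℝ => (-y) ^ c) (c * (-x) ^ (c - 1) * (-1)) x := by
      have h2 := Real.hasDerivAt_rpow_const (x := -x) (p := c) (Or.inl hne)
      exact h2.comp x (hasDerivAt_neg x)
    have heq : (fun y : ℝ => |y| ^ c) =ᶠ[nhds x] fun y => (-y) ^ c := by
      filter_upwards [Iio_mem_nhds h] with y hy
      rw [abs_of_neg hy]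
    have h3 : c * (-x) ^ (c - 1) * (-1) = c * |x| ^ c / x := by
      rw [abs_of_neg h, Real.rpow_sub_one hne]
      field_simp
    exact (h3 ▸ h1).congr_of_eventuallyEq heq
  · have hne : x ≠ 0 := ne_of_gt h
    have h1 := Real.hasDerivAt_rpow_const (x := x) (p := c) (Or.inl hne)
    have heq : (fun y : ℝ => |y| ^ c) =ᶠ[nhds x] fun y => y ^ c := by
      filter_upwards [Ioi_mem_nhds h] with y hy
      rw [abs_of_pos hy]
    have h3 : c * x ^ (c - 1) = c * |x| ^ c / x := by
      rw [abs_of_pos h, Real.rpow_sub_one hne]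
      ring
    exact (h3 ▸ h1).congr_of_eventuallyEq heq

lemma diffAt_of_contDiffOn {n : ℕ} {U : Set (Fin n → ℝ)} (hU : IsOpen U)
    {f : (Fin n → ℝ) → ℝ} (hf : ContDiffOn ℝ ∞ f U) {p : Fin n → ℝ} (hp : p ∈ U) :
    DifferentiableAt ℝ f p :=
  (hf.contDiffAt (hU.mem_nhds hp)).differentiableAt (by simp)

lemma pd_mul {n : ℕ} {f h : (Fin n → ℝ) → ℝ} {p : Fin n → ℝ} (k : Fin n)
    (hf : DifferentiableAt ℝ f p) (hh : DifferentiableAt ℝ h p) :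
    pd k (fun q => f q * h q) p = pd k f p * h p + f p * pd k h p := by
  simp only [pd]
  rw [fderiv_fun_mul hf hh]
  simp only [ContinuousLinearMap.add_apply, ContinuousLinearMap.smul_apply, smul_eq_mul]
  ring

lemma inv_symm_of_metric {n : ℕ} {U : Set (Fin n → ℝ)}
    {g : (Fin n → ℝ) → Matrix (Fin n) (Fin n) ℝ} (hg : MetricOn U g)
    {p : Fin n → ℝ} (hp : p ∈ U) (s a : Fin n) : (g p)⁻¹ s a = (g p)⁻¹ a s := by
  have ht : (g p)ᵀ = g p := by
    ext i j
    exact hg.2.1 p hp j i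
  nth_rewrite 1 [← ht]
  rw [← Matrix.transpose_nonsing_inv, Matrix.transpose_apply]

lemma lc_trace {n : ℕ} {U : Set (Fin n → ℝ)}
    {g : (Fin n → ℝ) → Matrix (Fin n) (Fin n) ℝ} (hg : MetricOn U g)
    {p : Fin n → ℝ} (hp : p ∈ U) (k : Fin n) :
    ∑ s, LeviCivita g p s s k
      = (1 / 2) * ∑ a, ∑ s, (g p)⁻¹ s a * pd k (fun q => g q a s) p := by
  simp only [LeviCivita]
  rw [← Finset.mul_sum]
  congr 1
  have expand : ∑ s : Fin n, ∑ a : Fin n, (g p)⁻¹ s a *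
      (pd s (fun q => g q a k) p + pd k (fun q => g q a s) p - pd a (fun q => g q s k) p)
      = (∑ s : Fin n, ∑ a : Fin n, (g p)⁻¹ s a * pd s (fun q => g q a k) p)
        + (∑ s : Fin n, ∑ a : Fin n, (g p)⁻¹ s a * pd k (fun q => g q a s) p)
        - ∑ s : Fin n, ∑ a : Fin n, (g p)⁻¹ s a * pd a (fun q => g q s k) p := by
    simp only [mul_add, mul_sub, Finset.sum_add_distrib, Finset.sum_sub_distrib]
  rw [expand]
  have hcancel : (∑ s : Fin n, ∑ a : Fin n, (g p)⁻¹ s a * pd s (fun q => g q a k) p)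
      = ∑ s : Fin n, ∑ a : Fin n, (g p)⁻¹ s a * pd a (fun q => g q s k) p := by
    rw [Finset.sum_comm]
    refine Finset.sum_congr rfl fun a _ => Finset.sum_congr rfl fun s _ => ?_
    rw [inv_symm_of_metric hg hp s a]
  rw [hcancel, add_sub_cancel_left]
  exact Finset.sum_comm

lemma e_hasFDerivAt {n : ℕ} {U : Set (Fin n → ℝ)} (hU : IsOpen U)
    {g : (Fin n → ℝ) → Matrix (Fin n) (Fin n) ℝ} (hg : MetricOn U g)
    {p : Fin n → ℝ} (hp : p ∈ U) :
    HasFDerivAt (fun q => |(g q).det| ^ (2 / ((n : ℝ) + 1)))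
      ((2 / ((n : ℝ) + 1) * |(g p).det| ^ (2 / ((n : ℝ) + 1)) / (g p).det) •
        (∑ a, ∑ i, Matrix.adjugate (g p) i a • fderiv ℝ (fun q => g q a i) p)) p := by
  have hdiff : ∀ a b, DifferentiableAt ℝ (fun q => g q a b) p := fun a b =>
    diffAt_of_contDiffOn hU (hg.1 a b) hp
  have hdet := hasFDerivAt_det_comp g p hdiff
  have habs := my_hasDerivAt_abs_rpow (c := 2 / ((n : ℝ) + 1)) (hg.2.2 p hp)
  exact habs.comp_hasFDerivAt p hdet

lemma pd_e {n : ℕ} {U : Set (Fin n → ℝ)} (hU : IsOpen U)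
    {g : (Fin n → ℝ) → Matrix (Fin n) (Fin n) ℝ} (hg : MetricOn U g)
    {p : Fin n → ℝ} (hp : p ∈ U) (k : Fin n) :
    pd k (fun q => |(g q).det| ^ (2 / ((n : ℝ) + 1))) p
      = (4 / ((n : ℝ) + 1)) * (∑ s, LeviCivita g p s s k)
          * |(g p).det| ^ (2 / ((n : ℝ) + 1)) := by
  have hE := e_hasFDerivAt hU hg hp
  have hd := hg.2.2 p hp
  rw [pd, hE.fderiv]
  simp only [ContinuousLinearMap.smul_apply, ContinuousLinearMap.sum_apply, smul_eq_mul]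
  have hadj : ∀ a i : Fin n, Matrix.adjugate (g p) i a = (g p).det * (g p)⁻¹ i a :=
    fun a i => adjugate_eq_det_smul_inv _ hd i a
  have hsum : (∑ a : Fin n, ∑ i : Fin n, Matrix.adjugate (g p) i a *
        (fderiv ℝ (fun q => g q a i) p) (Pi.single k 1))
      = (g p).det * ∑ a, ∑ i, (g p)⁻¹ i a * pd k (fun q => g q a i) p := by
    rw [Finset.mul_sum]
    refine Finset.sum_congr rfl fun a _ => ?_
    rw [Finset.mul_sum]
    refine Finset.sum_congr rfl fun i _ => ?_
    simp only [hadj a i, pd]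
    ring
  rw [hsum, lc_trace hg hp k]
  have hne : (n : ℝ) + 1 ≠ 0 := by positivity
  field_simp
  ring

lemma cov_proj_change {n : ℕ} {U : Set (Fin n → ℝ)} {Γ Γ' : Christoffel n}
    {φ : (Fin n → ℝ) → Fin n → ℝ} (hmem : ProjChange Γ Γ' φ U)
    (K : (Fin n → ℝ) → Fin n → Fin n → ℝ) {p : Fin n → ℝ} (hp : p ∈ U) (i j k : Fin n) :
    covForm2 (-4) Γ' K p i j k = covForm2 (-4) Γ K p i j k
      + 2 * φ p k * K p i j - φ p i * K p k j - φ p j * K p i k := by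
  simp only [covForm2]
  have S1 : ∑ s, Γ' p s i k * K p s j
      = (∑ s, Γ p s i k * K p s j) + φ p k * K p i j + φ p i * K p k j := by
    have e1 : ∀ s, Γ' p s i k * K p s j = Γ p s i k * K p s j
        + (if s = i then φ p k else 0) * K p s j + (if s = k then φ p i else 0) * K p s j := by
      intro s
      rw [hmem p hp s i k]
      ring
    simp only [e1, Finset.sum_add_distrib, ite_mul, zero_mul, Finset.sum_ite_eq',
      Finset.mem_univ, if_true]
  have S2 : ∑ s, Γ' p s j k * K p i s
      = (∑ s, Γ p s j k * K p i s) + φ p k * K p i j + φ p j * K p i k := by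
    have e1 : ∀ s, Γ' p s j k * K p i s = Γ p s j k * K p i s
        + (if s = j then φ p k else 0) * K p i s + (if s = k then φ p j else 0) * K p i s := by
      intro s
      rw [hmem p hp s j k]
      ring
    simp only [e1, Finset.sum_add_distrib, ite_mul, zero_mul, Finset.sum_ite_eq',
      Finset.mem_univ, if_true]
  have S3 : ∑ s, Γ' p s s k = (∑ s, Γ p s s k) + ((n : ℝ) + 1) * φ p k := by
    have e1 : ∀ s, Γ' p s s k = Γ p s s k + φ p k + (if s = k then φ p s else 0) := by
      intro s
      rw [hmem p hp s s k]
      simp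
    simp only [e1, Finset.sum_add_distrib, Finset.sum_ite_eq', Finset.mem_univ, if_true,
      Finset.sum_const, Finset.card_univ, Fintype.card_fin, nsmul_eq_mul]
    ring
  rw [S1, S2, S3]
  have hne : (n : ℝ) + 1 ≠ 0 := by positivity
  field_simp
  ring


end ProjGeo

namespace ProjGeo

/-- Let `K` be a symmetric `(0,2)`-tensor of projective weight `−4`
satisfying the projective Killing equation with respect to (any connection in) a projective
class `[Γ]`.  Then for any pseudo-Riemannian metric `g` whose Levi-Civita connection lies in
`[Γ]`, the unweighted tensor `K̂ := K ⊗ (Vol_g)^{4/(n+1)}` (with coefficient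
`K̂_{ij} = K_{ij} |det g|^{2/(n+1)}`) is a Killing tensor of `g`:
`K̂_{ij,k} + K̂_{jk,i} + K̂_{ki,j} = 0` with respect to the Levi-Civita connection of `g`. -/
theorem statement_11 {n : ℕ} (hn : 2 ≤ n) (U : Set (Fin n → ℝ)) (hU : IsOpen U)
    (Γ : Christoffel n) (hTF : TorsionFree Γ) (hsm : SmoothChristoffelOn U Γ)
    (K : (Fin n → ℝ) → Fin n → Fin n → ℝ)
    (hKsymm : ∀ p i j, K p i j = K p j i)
    (hKsm : ∀ i j, ContDiffOn ℝ ∞ (fun p => K p i j) U)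
    (hKill : ∀ p ∈ U, ∀ i j k,
      covForm2 (-4) Γ K p i j k + covForm2 (-4) Γ K p j k i
        + covForm2 (-4) Γ K p k i j = 0)
    (g : (Fin n → ℝ) → Matrix (Fin n) (Fin n) ℝ) (hg : MetricOn U g)
    (φ : (Fin n → ℝ) → Fin n → ℝ) (hmem : ProjChange Γ (LeviCivita g) φ U)
    (Khat : (Fin n → ℝ) → Fin n → Fin n → ℝ)
    (hKhat : ∀ p i j, Khat p i j = K p i j * |(g p).det| ^ (2 / ((n : ℝ) + 1))) :
    ∀ p ∈ U, ∀ i j k,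
      covForm2 0 (LeviCivita g) Khat p i j k + covForm2 0 (LeviCivita g) Khat p j k i
        + covForm2 0 (LeviCivita g) Khat p k i j = 0 := by
  intro p hp i j k
  have hd := hg.2.2 p hp
  have hediff : DifferentiableAt ℝ (fun q => |(g q).det| ^ (2 / ((n : ℝ) + 1))) p :=
    (e_hasFDerivAt hU hg hp).differentiableAt
  have hRel : ∀ a b d : Fin n, covForm2 0 (LeviCivita g) Khat p a b d
      = covForm2 (-4) (LeviCivita g) K p a b d * |(g p).det| ^ (2 / ((n : ℝ) + 1)) := by
    intro a b d
    have hfun : (fun q => Khat q a b)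
        = fun q => K q a b * |(g q).det| ^ (2 / ((n : ℝ) + 1)) :=
      funext fun q => hKhat q a b
    simp only [covForm2, hfun]
    rw [pd_mul d (diffAt_of_contDiffOn hU (hKsm a b) hp) hediff, pd_e hU hg hp d]
    simp only [hKhat]
    have hS1 : ∑ s, LeviCivita g p s a d * (K p s b * |(g p).det| ^ (2 / ((n : ℝ) + 1)))
        = (∑ s, LeviCivita g p s a d * K p s b) * |(g p).det| ^ (2 / ((n : ℝ) + 1)) := by
      rw [Finset.sum_mul]; exact Finset.sum_congr rfl fun s _ => by ring
    have hS2 : ∑ s, LeviCivita g p s b d * (K p a s * |(g p).det| ^ (2 / ((n : ℝ) + 1)))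
        = (∑ s, LeviCivita g p s b d * K p a s) * |(g p).det| ^ (2 / ((n : ℝ) + 1)) := by
      rw [Finset.sum_mul]; exact Finset.sum_congr rfl fun s _ => by ring
    rw [hS1, hS2]
    have hne : (n : ℝ) + 1 ≠ 0 := by positivity
    field_simp
    ring
  rw [hRel i j k, hRel j k i, hRel k i j]
  have hinv : covForm2 (-4) (LeviCivita g) K p i j k + covForm2 (-4) (LeviCivita g) K p j k i
      + covForm2 (-4) (LeviCivita g) K p k i j = 0 := by
    rw [cov_proj_change hmem K hp i j k, cov_proj_change hmem K hp j k i,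
      cov_proj_change hmem K hp k i j]
    linear_combination hKill p hp i j k + 2 * φ p k * hKsymm p i j
      + 2 * φ p i * hKsymm p j k + 2 * φ p j * hKsymm p k i
  linear_combination (|(g p).det| ^ (2 / ((n : ℝ) + 1))) * hinv


end ProjGeo
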